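/- arXiv:1309.1680 — 4 statements merged into one kernel-verified Lean document; each statement's English description precedes it below -/
import Mathlib

section
/- Let $\mathbb{F}$ be a field and $i, j, k \in \mathbb{F}^\times$ pairwise distinct with $1+ij \neq 0$ and $i + j \neq 0$. Let $\Gamma_{ij} = \begin{pmatrix} \frac{ij(i+j)}{1+ij} & \frac{ij}{1+ij} \\ \frac{(1-i^2)(j^2-1)}{1+ij} & \frac{i+j}{1+ij}\end{pmatrix}$ and $\Gamma_k = \begin{pmatrix} k & 1 \\ 0 & k^{-1}\end{pmatrix}$. Then $\det(\Gamma_{ij} - \Gamma_k) = \frac{(i+j)(k-i)(j-k)}{k(1+ij)}$, which is nonzero. -/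
theorem det_gamma_ij_sub_gamma_k (F : Type*) [Field F]
    (i j k : F) (hi : i ≠ 0) (hj : j ≠ 0) (hk : k ≠ 0)
    (hij : i ≠ j) (hik : i ≠ k) (hjk : j ≠ k)
    (h1 : 1 + i * j ≠ 0) (h2 : i + j ≠ 0) :
    Matrix.det (!![i * j * (i + j) / (1 + i * j), i * j / (1 + i * j);
                   (1 - i ^ 2) * (j ^ 2 - 1) / (1 + i * j), (i + j) / (1 + i * j)] -
                !![k, 1; 0, k⁻¹]) = (i + j) * (k - i) * (j - k) / (k * (1 + i * j)) ∧
    (i + j) * (k - i) * (j - k) / (k * (1 + i * j)) ≠ 0 := by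
  constructor
  · rw [show (!![i * j * (i + j) / (1 + i * j), i * j / (1 + i * j);
        (1 - i ^ 2) * (j ^ 2 - 1) / (1 + i * j), (i + j) / (1 + i * j)] -
        !![k, 1; 0, k⁻¹]) = !![i * j * (i + j) / (1 + i * j) - k, i * j / (1 + i * j) - 1;
        (1 - i ^ 2) * (j ^ 2 - 1) / (1 + i * j) - 0, (i + j) / (1 + i * j) - k⁻¹] by
      ext a b; fin_cases a <;> fin_cases b <;> simp]
    rw [Matrix.det_fin_two_of]
    field_simp
    ring
  · have : k - i ≠ 0 := sub_ne_zero.mpr (Ne.symm hik)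
    have : j - k ≠ 0 := sub_ne_zero.mpr hjk
    have h3 : k - i ≠ 0 := sub_ne_zero.mpr (Ne.symm hik)
    have h4 : j - k ≠ 0 := sub_ne_zero.mpr hjk
    exact div_ne_zero (mul_ne_zero (mul_ne_zero h2 h3) h4) (mul_ne_zero hk h1)
end

section
/- Let $\mathbb{F}$ be a field and $i, j, k, l \in \mathbb{F}^\times$ pairwise distinct with $1+ij \neq 0$ and $1+kl \neq 0$. With $\Gamma_{ij}$ and $\Gamma_{kl}$ defined by $\Gamma_{ij} = \begin{pmatrix} \frac{ij(i+j)}{1+ij} & \frac{ij}{1+ij} \\ \frac{(1-i^2)(j^2-1)}{1+ij} & \frac{i+j}{1+ij}\end{pmatrix}$, one has $\det(\Gamma_{ij} - \Gamma_{kl}) = \frac{(i-k)(j-k)(i-l)(j-l)}{(1+ij)(1+kl)}$, which is nonzero. -/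
theorem det_gamma_ij_sub_gamma_kl (F : Type*) [Field F]
    (i j k l : F) (hi : i ≠ 0) (hj : j ≠ 0) (hk : k ≠ 0) (hl : l ≠ 0)
    (hij : i ≠ j) (hik : i ≠ k) (hil : i ≠ l) (hjk : j ≠ k) (hjl : j ≠ l) (hkl : k ≠ l)
    (h1 : 1 + i * j ≠ 0) (h2 : 1 + k * l ≠ 0) :
    Matrix.det (!![i * j * (i + j) / (1 + i * j), i * j / (1 + i * j);
                   (1 - i ^ 2) * (j ^ 2 - 1) / (1 + i * j), (i + j) / (1 + i * j)] -
                !![k * l * (k + l) / (1 + k * l), k * l / (1 + k * l);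
                   (1 - k ^ 2) * (l ^ 2 - 1) / (1 + k * l), (k + l) / (1 + k * l)]) =
      (i - k) * (j - k) * (i - l) * (j - l) / ((1 + i * j) * (1 + k * l)) ∧
    (i - k) * (j - k) * (i - l) * (j - l) / ((1 + i * j) * (1 + k * l)) ≠ 0 := by
  constructor
  · rw [show (!![i * j * (i + j) / (1 + i * j), i * j / (1 + i * j);
                   (1 - i ^ 2) * (j ^ 2 - 1) / (1 + i * j), (i + j) / (1 + i * j)] -
                !![k * l * (k + l) / (1 + k * l), k * l / (1 + k * l);
                   (1 - k ^ 2) * (l ^ 2 - 1) / (1 + k * l), (k + l) / (1 + k * l)]) =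
      !![i * j * (i + j) / (1 + i * j) - k * l * (k + l) / (1 + k * l),
         i * j / (1 + i * j) - k * l / (1 + k * l);
         (1 - i ^ 2) * (j ^ 2 - 1) / (1 + i * j) - (1 - k ^ 2) * (l ^ 2 - 1) / (1 + k * l),
         (i + j) / (1 + i * j) - (k + l) / (1 + k * l)] by
      ext a b; fin_cases a <;> fin_cases b <;> simp]
    rw [Matrix.det_fin_two_of]
    field_simp
    ring
  · apply div_ne_zero
    · exact mul_ne_zero (mul_ne_zero (mul_ne_zero (sub_ne_zero.2 hik) (sub_ne_zero.2 hjk)) (sub_ne_zero.2 hil)) (sub_ne_zero.2 hjl)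
    · exact mul_ne_zero h1 h2
end

section
/- Let $q$ be even (a power of 2) and $\mathbb{F}$ the field of order $q$. There exists a subset $S \subseteq \mathbb{F}^\times$ with $|S| = q/2$ such that for all distinct $i, j \in S$, $ij \neq 1$ (note that in characteristic 2, the conditions $i+j \neq 0$ and $ij \neq -1$ reduce to $ij \neq 1$ and $i \neq j$). -/
theorem exists_good_subset_even (q : ℕ) (F : Type*) [Field F] [Fintype F]
    (hcard : Fintype.card F = q) (hq : Even q) :
    ∃ S : Finset F, (∀ i ∈ S, i ≠ 0) ∧ S.card = q / 2 ∧
      ∀ i ∈ S, ∀ j ∈ S, i ≠ j → i * j ≠ 1 := by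
  classical
  have h2 : 1 < q := hcard ▸ Fintype.one_lt_card
  set f : F → ℕ := fun x => ((Fintype.equivFin F) x : ℕ) with hf
  have hfinj : Function.Injective f := fun a b h =>
    (Fintype.equivFin F).injective (Fin.ext h)
  -- square roots of 1 are trivial
  have hsq : ∀ x : F, x * x = 1 → x = 1 := by
    intro x hx
    have hx0 : x ≠ 0 := by rintro rfl; simp at hx
    set u : Fˣ := Units.mk0 x hx0 with hu
    have hu2 : u ^ 2 = 1 := by
      ext; simp [hu, pow_two, hx]
    have hd1 : orderOf u ∣ 2 := orderOf_dvd_of_pow_eq_one hu2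
    have hd2 : orderOf u ∣ q - 1 := by
      have := orderOf_dvd_card (x := u)
      rwa [Fintype.card_units, hcard] at this
    have hodd : Odd (q - 1) := Nat.Even.sub_odd (by omega) hq odd_one
    have hgcd : Nat.gcd 2 (q - 1) = 1 :=
      Nat.coprime_two_left.mpr hodd
    have : orderOf u = 1 := Nat.eq_one_of_dvd_one (hgcd ▸ Nat.dvd_gcd hd1 hd2)
    have : u = 1 := orderOf_eq_one_iff.mp this
    have := congrArg Units.val this
    simpa [hu] using this
  set N : Finset F := Finset.univ.filter (fun x => x ≠ 0) with hN
  have hNcard : N.card = q - 1 := by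
    rw [hN, Finset.filter_ne', Finset.card_erase_of_mem (Finset.mem_univ 0),
      Finset.card_univ, hcard]
  set S : Finset F := N.filter (fun x => f x ≤ f x⁻¹) with hS
  set T : Finset F := N.filter (fun x => ¬ f x ≤ f x⁻¹) with hT
  have hST : S.card + T.card = q - 1 := by
    rw [hS, hT, Finset.card_filter_add_card_filter_not, hNcard]
  have hmemS : ∀ x : F, x ∈ S ↔ x ≠ 0 ∧ f x ≤ f x⁻¹ := by
    intro x; simp [hS, hN]
  have hmemT : ∀ x : F, x ∈ T ↔ x ≠ 0 ∧ f x⁻¹ < f x := by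
    intro x; simp [hT, hN, Nat.lt_iff_le_and_ne, not_le]
  have h1S : (1 : F) ∈ S := by rw [hmemS]; simp
  -- bijection between S.erase 1 and T via inversion
  have hbij : (S.erase 1).card = T.card := by
    apply Finset.card_bij (fun a _ => a⁻¹)
    · intro a ha
      rw [Finset.mem_erase, hmemS] at ha
      obtain ⟨ha1, ha0, hle⟩ := ha
      rw [hmemT, inv_inv]
      refine ⟨inv_ne_zero ha0, lt_of_le_of_ne hle ?_⟩
      intro h
      have ha' : a = a⁻¹ := hfinj h
      have hm := mul_inv_cancel₀ ha0
      rw [← ha'] at hm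
      exact ha1 (hsq a hm)
    · intro a ha b hb h
      exact inv_injective h
    · intro b hb
      rw [hmemT] at hb
      obtain ⟨hb0, hlt⟩ := hb
      refine ⟨b⁻¹, ?_, inv_inv b⟩
      rw [Finset.mem_erase, hmemS, inv_inv]
      refine ⟨?_, inv_ne_zero hb0, le_of_lt hlt⟩
      intro h
      have hb1 : b = 1 := by rw [← inv_inv b, h, inv_one]
      rw [h, hb1] at hlt
      exact absurd hlt (lt_irrefl _)
  have hScard : S.card = q / 2 := by
    have := Finset.card_erase_of_mem h1S
    have hS1 : 1 ≤ S.card := Finset.card_pos.mpr ⟨1, h1S⟩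
    obtain ⟨k, rfl⟩ := hq
    omega
  refine ⟨S, ?_, hScard, ?_⟩
  · intro i hi; exact ((hmemS i).mp hi).1
  · intro i hi j hj hij hmul
    rw [hmemS] at hi hj
    have hji : j = i⁻¹ := eq_inv_of_mul_eq_one_right hmul
    have hij' : i = j⁻¹ := eq_inv_of_mul_eq_one_left hmul
    have h1 := hi.2
    have h2 := hj.2
    rw [← hji] at h1
    rw [← hij'] at h2
    exact hij (hfinj (le_antisymm h1 h2))
end

section
/- Let $q$ be an odd prime power and $\mathbb{F}$ the field of order $q$. There exists a subset $S \subseteq \mathbb{F}^\times$ with $|S| = (q-1)/2$ or $|S| \geq \lfloor q/2 \rfloor$ such that for all distinct $i, j \in S$: $i + j \neq 0$ and $ij \neq -1$. Precisely: there exists such $S$ with $2|S| \geq q - 1$. -/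
theorem exists_good_subset_odd (q : ℕ) (F : Type*) [Field F] [Fintype F]
    (hcard : Fintype.card F = q) (hq : Odd q) :
    ∃ S : Finset F, (∀ i ∈ S, i ≠ 0) ∧ 2 * S.card ≥ q - 1 ∧
      ∀ i ∈ S, ∀ j ∈ S, i ≠ j → i + j ≠ 0 ∧ i * j ≠ -1 := by
  classical
  have hchar : ringChar F ≠ 2 := by
    intro h
    have h2 := FiniteField.even_card_of_char_two (F := F) h
    rw [hcard] at h2
    have := Nat.odd_iff.mp hq
    omega
  have h2 : (2 : F) ≠ 0 := Ring.two_ne_zero hchar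
  have hnegne : ∀ x : F, x ≠ 0 → -x ≠ x := by
    intro x hx h
    apply hx
    have h0 : (2 : F) * x = 0 := by linear_combination -h
    rcases mul_eq_zero.mp h0 with h' | h'
    · exact absurd h' h2
    · exact h'
  set e : F → ℕ := fun x => ((Fintype.equivFin F) x : ℕ) with he
  have einj : Function.Injective e := fun a b hab =>
    (Fintype.equivFin F).injective (Fin.val_injective hab)
  set good : F → Prop := fun x =>
    if x + x⁻¹ = 0 then e x < e (-x) else e (x + x⁻¹) < e (-(x + x⁻¹)) with hgood
  have hT : ∀ x : F, x ≠ 0 → -x + (-x)⁻¹ = -(x + x⁻¹) := by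
    intro x hx; rw [inv_neg]; ring
  have key : ∀ x : F, x ≠ 0 → (good (-x) ↔ ¬ good x) := by
    intro x hx
    have hT' := hT x hx
    simp only [hgood, hT', neg_neg, neg_eq_zero]
    split_ifs with h
    · have hne := einj.ne (hnegne x hx)
      omega
    · have hne := einj.ne (hnegne _ h)
      omega
  set S : Finset F := (Finset.univ.filter (fun x : F => x ≠ 0)).filter good with hS
  set B : Finset F := (Finset.univ.filter (fun x : F => x ≠ 0)).filter
    (fun x => ¬ good x) with hB
  have hpart : S.card + B.card = q - 1 := by
    have h1 := Finset.card_filter_add_card_filter_not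
      (s := Finset.univ.filter (fun x : F => x ≠ 0)) (p := good)
    have h2 : (Finset.univ.filter (fun x : F => x ≠ 0)).card = q - 1 := by
      rw [Finset.filter_ne', Finset.card_erase_of_mem (Finset.mem_univ 0),
        Finset.card_univ, hcard]
    rw [← h2]
    convert h1 using 3
  have hBS : B.card ≤ S.card := by
    apply Finset.card_le_card_of_injOn (fun x => -x)
    · intro x hx
      simp only [hB, Finset.mem_coe, Finset.mem_filter, Finset.mem_univ, true_and] at hx
      simp only [hS, Finset.mem_coe, Finset.mem_filter, Finset.mem_univ, true_and]
      exact ⟨neg_ne_zero.mpr hx.1, (key x hx.1).mpr hx.2⟩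
    · intro a _ b _ hab
      exact neg_injective hab
  refine ⟨S, ?_, ?_, ?_⟩
  · intro i hi
    simp only [hS, Finset.mem_filter, Finset.mem_univ, true_and] at hi
    exact hi.1
  · omega
  · intro i hi j hj hij
    simp only [hS, Finset.mem_filter, Finset.mem_univ, true_and] at hi hj
    obtain ⟨hi0, hgi⟩ := hi
    obtain ⟨hj0, hgj⟩ := hj
    constructor
    · intro h
      have hjeq : j = -i := by linear_combination h
      rw [hjeq] at hgj
      exact (key i hi0).mp hgj hgi
    · intro h
      have hjeq : j = -i⁻¹ := by
        have hji : i * (-i⁻¹) = -1 := by field_simp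
        exact mul_left_cancel₀ hi0 (h.trans hji.symm)
      by_cases ht : i + i⁻¹ = 0
      · have hii : i⁻¹ = -i := by linear_combination ht
        rw [hii, neg_neg] at hjeq
        exact hij hjeq.symm
      · rw [hjeq] at hgj
        have h2' : ¬ good i⁻¹ := (key _ (inv_ne_zero hi0)).mp hgj
        apply h2'
        have heq : i⁻¹ + (i⁻¹)⁻¹ = i + i⁻¹ := by rw [inv_inv, add_comm]
        simp only [hgood, heq] at hgi ⊢
        rw [if_neg ht] at hgi ⊢
        exact hgi
end
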